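/- arXiv:1602.04514 — 3 statements merged into one kernel-verified Lean document; each statement's English description precedes it below -/
import Mathlib

section
/- For every real x > 0, one has 2x/3 > Ω(1/x, 1/(2x)). -/
open scoped BigOperators Classical ComplexOrder

noncomputable section

namespace Paper

/-- `Ω(x,y) = Σ_{n ∈ ℤ} max(0, 1 − |n·x − y|)²`. -/
def Omega (x y : ℝ) : ℝ := ∑' n : ℤ, max 0 (1 - |(n : ℝ) * x - y|) ^ 2

/-- The extension of a finite sequence of length `ℓ` by zero to all of `ℤ`. -/
def ext (ℓ : ℕ) (f : ℕ → ℂ) (j : ℤ) : ℂ :=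
  if 0 ≤ j ∧ j < (ℓ : ℤ) then f j.toNat else 0

/-- Aperiodic crosscorrelation `C_{f,g}(s)` of two sequences of length `ℓ` at shift `s`. -/
def XC (ℓ : ℕ) (f g : ℕ → ℂ) (s : ℤ) : ℂ :=
  ∑' j : ℤ, ext ℓ f j * (starRingEnd ℂ) (ext ℓ g (j + s))

/-- Crosscorrelation demerit factor `CDF(f,g)`. -/
def CDF (ℓ : ℕ) (f g : ℕ → ℂ) : ℝ :=
  (∑' s : ℤ, ‖XC ℓ f g s‖ ^ 2) /
    (‖XC ℓ f f 0‖ * ‖XC ℓ g g 0‖)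

/-- Autocorrelation demerit factor `DF(f) = CDF(f,f) − 1`. -/
def DF (ℓ : ℕ) (f : ℕ → ℂ) : ℝ := CDF ℓ f f - 1

/-- `u` is a unimodularization of the length-`ℓ` sequence `f`: it agrees with `f` at
nonzero terms and replaces each zero term by a complex number of modulus `1`. -/
def IsUnimodularization (ℓ : ℕ) (f u : ℕ → ℂ) : Prop :=
  ∀ j < ℓ, (f j ≠ 0 → u j = f j) ∧ (f j = 0 → ‖u j‖ = 1)

/-- The multiplicative characters of `F_p = ZMod p`, extended by `χ(0) = 0`. -/
abbrev MChar (p : ℕ) := MulChar (ZMod p) ℂ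

instance (p : ℕ) [Fact p.Prime] : Fintype (MChar p) := Fintype.ofFinite _

/-- The Gauss sum `τ(χ) = Σ_{x ∈ F_p} e^{2πi x / p} χ(x)` (note `χ(0) = 0`). -/
def gauss (p : ℕ) [Fact p.Prime] (χ : MChar p) : ℂ :=
  ∑ x : ZMod p, Complex.exp (2 * Real.pi * Complex.I * (x.val : ℂ) / (p : ℂ)) * χ x

/-- The quadratic character `η` of `F_p`, with values in `ℂ`. -/
def quadChar (p : ℕ) [Fact p.Prime] : MChar p :=
  (quadraticChar (ZMod p)).ringHomComp (Int.castRingHom ℂ)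

/-- `c` is a character combination: the coefficient of the trivial character vanishes and
the sum of the squared magnitudes of the coefficients is `1`. -/
def IsCharCombo (p : ℕ) [Fact p.Prime] (c : MChar p → ℂ) : Prop :=
  c 1 = 0 ∧ ∑ χ : MChar p, ‖c χ‖ ^ 2 = 1

/-- The function `F(a) = Σ_χ f_χ · χ(a)` attached to a character combination. -/
def combFun (p : ℕ) [Fact p.Prime] (c : MChar p → ℂ) (a : ZMod p) : ℂ :=
  ∑ χ : MChar p, c χ * χ a

/-- The character combination sequence with shift `s`: its `j`-th term is `F(s + j)`. -/
def combSeq (p : ℕ) [Fact p.Prime] (c : MChar p → ℂ) (s : ℤ) : ℕ → ℂ :=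
  fun j => combFun p c (((s + (j : ℤ)) : ℤ) : ZMod p)

/-- A character combination is unimodularizable when `|F(a)| = 1` for all `a ≠ 0`. -/
def Unimodularizable (p : ℕ) [Fact p.Prime] (c : MChar p → ℂ) : Prop :=
  ∀ a : ZMod p, a ≠ 0 → ‖combFun p c a‖ = 1

/-- The parameter `S_{f,g}` of a pair of character combination sequences. -/
def Sparam (p : ℕ) [Fact p.Prime] (c d : MChar p → ℂ) : ℂ :=
  (∑ φ : MChar p, ∑ χ : MChar p, ∑ ψ : MChar p, ∑ ω : MChar p,
      if φ * χ = ψ * ω ∧ φ ≠ χ⁻¹ ∧ φ ≠ ψ ∧ φ ≠ ω then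
        c φ * d χ * (starRingEnd ℂ) (c ψ * d ω) *
          (gauss p φ * gauss p χ * (starRingEnd ℂ) (gauss p ψ * gauss p ω)) / (p : ℂ) ^ 2
      else 0)
    - ((∑ φ : MChar p, ‖c φ * d φ‖ ^ 2 : ℝ) : ℂ)
    - ((∑ φ : MChar p, ‖c φ * d φ⁻¹‖ ^ 2 : ℝ) : ℂ)
    - ∑ φ : MChar p, c φ * (starRingEnd ℂ) (c φ⁻¹) * d φ⁻¹ * (starRingEnd ℂ) (d φ)
    + ((‖c (quadChar p) * d (quadChar p)‖ ^ 2 : ℝ) : ℂ)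

/-- The parameter `S_{f,f}` of a single character combination sequence. -/
def SparamAuto (p : ℕ) [Fact p.Prime] (c : MChar p → ℂ) : ℂ :=
  (∑ φ : MChar p, ∑ χ : MChar p, ∑ ψ : MChar p, ∑ ω : MChar p,
      if φ * χ = ψ * ω ∧ φ ≠ χ⁻¹ ∧ φ ≠ ψ ∧ φ ≠ ω then
        c φ * c χ * (starRingEnd ℂ) (c ψ * c ω) *
          (gauss p φ * gauss p χ * (starRingEnd ℂ) (gauss p ψ * gauss p ω)) / (p : ℂ) ^ 2
      else 0)
    - 2 * ((∑ φ : MChar p, ‖c φ * c φ⁻¹‖ ^ 2 : ℝ) : ℂ)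
    - ((∑ φ : MChar p, ‖c φ‖ ^ 4 : ℝ) : ℂ)
    + ((‖c (quadChar p)‖ ^ 4 : ℝ) : ℂ)

/-- The parameter `U_{f,g}`. -/
def Uparam (p : ℕ) [Fact p.Prime] (c d : MChar p → ℂ) : ℝ :=
  ‖∑ φ : MChar p, c φ * (starRingEnd ℂ) (d φ)‖ ^ 2

/-- The parameter `V_{f,g}`. -/
def Vparam (p : ℕ) [Fact p.Prime] (c d : MChar p → ℂ) : ℝ :=
  ‖∑ φ : MChar p, c φ * d φ⁻¹ * φ (-1)‖ ^ 2

/-- The parameter `W_f`. -/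
def Wparam (p : ℕ) [Fact p.Prime] (c : MChar p → ℂ) : ℝ :=
  ∑ φ : MChar p, ‖c φ‖

/-- Periodic crosscorrelation of two periodic sequences of period `n` at shift `s`. -/
def PC (n : ℕ) [NeZero n] (u v : ZMod n → ℂ) (s : ZMod n) : ℂ :=
  ∑ j : ZMod n, u j * (starRingEnd ℂ) (v (j + s))

/-- Fourier transform `û_a = Σ_x u_x e^{2πi a x / n}` of a periodic sequence of period `n`. -/
def FT (n : ℕ) [NeZero n] (u : ZMod n → ℂ) (a : ZMod n) : ℂ :=
  ∑ x : ZMod n, u x * Complex.exp (2 * Real.pi * Complex.I * ((a.val : ℂ) * (x.val : ℂ)) / (n : ℂ))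

/-- `α` is a primitive element of `F_p`, i.e. a generator of the unit group. -/
def IsPrimitive (p : ℕ) (α : (ZMod p)ˣ) : Prop :=
  ∀ x : (ZMod p)ˣ, x ∈ Subgroup.zpowers α

/-- The subgroup `F_p^{*2m}` of `2m`-th powers in the unit group of `F_p`. -/
def powSubgroup (p m : ℕ) : Subgroup (ZMod p)ˣ :=
  (powMonoidHom (2 * m) : (ZMod p)ˣ →* (ZMod p)ˣ).range

/-- The quotient group `F_p^* / F_p^{*2m}` of `2m`-th power residue classes. -/
abbrev ResCosets (p m : ℕ) := (ZMod p)ˣ ⧸ powSubgroup p m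

/-- The function `F_{p,𝒜}`: `0` at `0`, `+1` on the union of the cosets in `𝒜`,
`−1` on the remaining nonzero elements. -/
def resFun (p m : ℕ) (A : Finset (ResCosets p m)) (j : ZMod p) : ℂ :=
  if h : IsUnit j then (if (QuotientGroup.mk h.unit : ResCosets p m) ∈ A then 1 else -1) else 0

/-- The sequence of a `2m`-th residue class construction, with shift `s`. -/
def resSeq (p m : ℕ) (A : Finset (ResCosets p m)) (s : ℤ) : ℕ → ℂ :=
  fun j => resFun p m A (((s + (j : ℤ)) : ℤ) : ZMod p)

/-- The character combination coefficients of a `2m`-th residue class sequence: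
`f_χ = (1/m) Σ_{A ∈ 𝒜} χ̄(A)` for nontrivial `χ` in the subgroup `Θ_p` of order `2m`
(characterized by `χ^{2m} = 1`), and `f_χ = 0` otherwise; `χ̄(A)` is evaluated at a
representative of the coset `A`, on which `χ̄` is constant. -/
def resCoef (p m : ℕ) [Fact p.Prime] (A : Finset (ResCosets p m)) (χ : MChar p) : ℂ :=
  if χ ≠ 1 ∧ χ ^ (2 * m) = 1 then
    (1 / (m : ℂ)) * ∑ B ∈ A, χ⁻¹ ((B.out : (ZMod p)ˣ) : ZMod p)
  else 0

/-- The image of the coset `B` under multiplication by `−1`. -/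
def negCoset (p m : ℕ) (B : ResCosets p m) : ResCosets p m :=
  QuotientGroup.mk ((-1 : (ZMod p)ˣ) * B.out)

/-- The quadratic residue function `H̃_p`: `+1` on `F_p^{*2}`, `−1` on `α F_p^{*2}`,
and `0` at `0`. -/
def Htilde (p : ℕ) (α : (ZMod p)ˣ) (x : ZMod p) : ℂ :=
  if ∃ y : (ZMod p)ˣ, x = ((y ^ 2 : (ZMod p)ˣ) : ZMod p) then 1
  else if ∃ y : (ZMod p)ˣ, x = ((α * y ^ 2 : (ZMod p)ˣ) : ZMod p) then -1
  else 0

/-- The quartic residue function `F̃_p`: `+1` on `F_p^{*4} ∪ αF_p^{*4}`,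
`−1` on `α²F_p^{*4} ∪ α³F_p^{*4}`, and `0` at `0`. -/
def Ftilde (p : ℕ) (α : (ZMod p)ˣ) (x : ZMod p) : ℂ :=
  if (∃ y : (ZMod p)ˣ, x = ((y ^ 4 : (ZMod p)ˣ) : ZMod p)) ∨
      (∃ y : (ZMod p)ˣ, x = ((α * y ^ 4 : (ZMod p)ˣ) : ZMod p)) then 1
  else if (∃ y : (ZMod p)ˣ, x = ((α ^ 2 * y ^ 4 : (ZMod p)ˣ) : ZMod p)) ∨
      (∃ y : (ZMod p)ˣ, x = ((α ^ 3 * y ^ 4 : (ZMod p)ˣ) : ZMod p)) then -1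
  else 0

/-- The quartic residue function `G̃_p`: `+1` on `F_p^{*4} ∪ α³F_p^{*4}`,
`−1` on `αF_p^{*4} ∪ α²F_p^{*4}`, and `0` at `0`. -/
def Gtilde (p : ℕ) (α : (ZMod p)ˣ) (x : ZMod p) : ℂ :=
  if (∃ y : (ZMod p)ˣ, x = ((y ^ 4 : (ZMod p)ˣ) : ZMod p)) ∨
      (∃ y : (ZMod p)ˣ, x = ((α ^ 3 * y ^ 4 : (ZMod p)ˣ) : ZMod p)) then 1
  else if (∃ y : (ZMod p)ˣ, x = ((α * y ^ 4 : (ZMod p)ˣ) : ZMod p)) ∨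
      (∃ y : (ZMod p)ˣ, x = ((α ^ 2 * y ^ 4 : (ZMod p)ˣ) : ZMod p)) then -1
  else 0

/-- The quadratic residue sequence `h̃_p^{s,ℓ}` (as a function; the length is used
in the correlation functionals). -/
def hSeq (p : ℕ) (α : (ZMod p)ˣ) (s : ℤ) : ℕ → ℂ :=
  fun j => Htilde p α (((s + (j : ℤ)) : ℤ) : ZMod p)

/-- The quartic residue sequence `f̃_p^{s,ℓ}`. -/
def fSeq (p : ℕ) (α : (ZMod p)ˣ) (s : ℤ) : ℕ → ℂ :=
  fun j => Ftilde p α (((s + (j : ℤ)) : ℤ) : ZMod p)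

/-- The quartic residue sequence `g̃_p^{s,ℓ}`. -/
def gSeq (p : ℕ) (α : (ZMod p)ˣ) (s : ℤ) : ℕ → ℂ :=
  fun j => Gtilde p α (((s + (j : ℤ)) : ℤ) : ZMod p)

private lemma key_ineq (t k : ℝ) (ht : 0 < t) (hk : 1 ≤ k) :
    6 * t * max 0 (1 - k * t) ^ 2 ≤ max 0 (1 - (k - 1) * t) ^ 3 - max 0 (1 - (k + 1) * t) ^ 3 := by
  rcases le_or_gt (1 - k * t) 0 with h | h
  · rw [max_eq_left h]
    have hmono : max 0 (1 - (k + 1) * t) ^ 3 ≤ max 0 (1 - (k - 1) * t) ^ 3 := by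
      apply pow_le_pow_left₀ (le_max_left 0 _)
      exact max_le_max le_rfl (by nlinarith)
    nlinarith
  · have h1 : max 0 (1 - (k - 1) * t) = 1 - (k - 1) * t := max_eq_right (by nlinarith)
    have h0 : max 0 (1 - k * t) = 1 - k * t := max_eq_right h.le
    rcases le_or_gt (1 - (k + 1) * t) 0 with h2 | h2
    · rw [h0, h1, max_eq_left h2]
      have hAt : 1 - k * t ≤ t := by nlinarith
      nlinarith [mul_nonneg (mul_nonneg h.le ht.le) (sub_nonneg.mpr hAt),
        pow_pos h 3, pow_pos ht 3]
    · rw [h0, h1, max_eq_right h2.le]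
      nlinarith [pow_pos ht 3]

private lemma key_strict (t : ℝ) (ht : 0 < t) :
    6 * t * max 0 (1 - t) ^ 2 < 1 - max 0 (1 - 2 * t) ^ 3 := by
  rcases le_or_gt (1 - 2 * t) 0 with h | h
  · rw [max_eq_left h]
    rcases le_or_gt (1 - t) 0 with h' | h'
    · rw [max_eq_left h']; norm_num
    · rw [max_eq_right h'.le]
      nlinarith [mul_nonneg (by linarith : (0:ℝ) ≤ 2 * t - 1) (sq_nonneg (1 - t)), sq_nonneg t]
  · have h' : (0:ℝ) < 1 - t := by nlinarith
    rw [max_eq_right h.le, max_eq_right h'.le]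
    nlinarith [pow_pos ht 3]

/-- For all `x > 0`, we have `2x/3 > Ω(1/x, 1/(2x))`. -/
theorem two_thirds_gt_omega (x : ℝ) (hx : 0 < x) :
    2 * x / 3 > Omega (1 / x) (1 / (2 * x)) := by
  set t : ℝ := 1 / (2 * x) with htdef
  have ht : 0 < t := by positivity
  set f : ℤ → ℝ := fun n => max 0 (1 - |(2 * (n : ℝ) - 1) * t|) ^ 2 with hfdef
  have hOmega : Omega (1 / x) (1 / (2 * x)) = ∑' n : ℤ, f n := by
    unfold Omega
    congr 1; funext n
    have : (n : ℝ) * (1 / x) - 1 / (2 * x) = (2 * (n : ℝ) - 1) * t := by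
      rw [htdef]; field_simp
    rw [this]
  set N : ℕ := ⌈x⌉₊ with hNdef
  have hN0 : 0 < N := Nat.ceil_pos.mpr hx
  have hNx : x ≤ N := Nat.le_ceil x
  set s : Finset ℤ := (Finset.range N).image (fun i : ℕ => -(i : ℤ)) ∪
      (Finset.range N).image (fun i : ℕ => (i : ℤ) + 1) with hsdef
  have vanish : ∀ n : ℤ, n ∉ s → f n = 0 := by
    intro n hn
    simp only [hsdef, Finset.mem_union, Finset.mem_image, Finset.mem_range, not_or,
      not_exists, not_and] at hn
    obtain ⟨hn1, hn2⟩ := hn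
    have habs : 2 * x + 1 ≤ |2 * (n : ℝ) - 1| := by
      rcases le_or_gt n 0 with hle | hlt
      · have hi : ¬ ((-n).toNat < N) := by
          intro hc
          exact hn1 (-n).toNat hc (by omega)
        have : (N : ℤ) ≤ -n := by omega
        have hnn : (n : ℝ) ≤ -(N : ℝ) := by exact_mod_cast (by omega : n ≤ -(N:ℤ))
        rw [le_abs]; right
        push_cast
        nlinarith
      · have hi : ¬ ((n - 1).toNat < N) := by
          intro hc
          exact hn2 (n - 1).toNat hc (by omega)
        have : (N : ℤ) + 1 ≤ n := by omega
        have hnn : (N : ℝ) + 1 ≤ (n : ℝ) := by exact_mod_cast this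
        rw [le_abs]; left
        nlinarith
    have h1 : (1 : ℝ) ≤ |(2 * (n : ℝ) - 1) * t| := by
      rw [abs_mul, abs_of_pos ht]
      have : (2 * x + 1) * t ≤ |2 * (n : ℝ) - 1| * t :=
        mul_le_mul_of_nonneg_right habs ht.le
      have hval : (2 * x + 1) * t = 1 + t := by rw [htdef]; field_simp
      nlinarith
    simp only [hfdef]
    rw [max_eq_left (by linarith)]
    norm_num
  have hsum : ∑' n : ℤ, f n = ∑ n ∈ s, f n := tsum_eq_sum vanish
  -- split the sum
  have hdisj : Disjoint ((Finset.range N).image (fun i : ℕ => -(i : ℤ)))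
      ((Finset.range N).image (fun i : ℕ => (i : ℤ) + 1)) := by
    rw [Finset.disjoint_left]
    intro a ha hb
    simp only [Finset.mem_image, Finset.mem_range] at ha hb
    obtain ⟨i, _, hi⟩ := ha; obtain ⟨j, _, hj⟩ := hb
    omega
  have hinj1 : Set.InjOn (fun i : ℕ => -(i : ℤ)) (Finset.range N) := by
    intro a _ b _ hab; simpa using hab
  have hinj2 : Set.InjOn (fun i : ℕ => (i : ℤ) + 1) (Finset.range N) := by
    intro a _ b _ hab; simpa using hab
  have hpair : ∀ i : ℕ, f (-(i : ℤ)) = f ((i : ℤ) + 1) := by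
    intro i
    simp only [hfdef]
    congr 2
    push_cast
    rw [show (2 * (-(i:ℝ)) - 1) * t = -((2 * ((i:ℝ) + 1) - 1) * t) by ring, abs_neg]
  have hsplit : ∑ n ∈ s, f n = 2 * ∑ i ∈ Finset.range N, f ((i : ℤ) + 1) := by
    rw [hsdef, Finset.sum_union hdisj, Finset.sum_image (fun a ha b hb => hinj1 ha hb),
      Finset.sum_image (fun a ha b hb => hinj2 ha hb)]
    rw [Finset.sum_congr rfl (fun i _ => hpair i)]
    ring
  -- the positive-side sum
  set F : ℕ → ℝ := fun i => max 0 (1 - (2 * (i : ℝ) + 1) * t) ^ 2 with hFdef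
  have hFf : ∀ i : ℕ, f ((i : ℤ) + 1) = F i := by
    intro i
    simp only [hfdef, hFdef]
    have harg : (2 * (((i : ℤ) : ℝ)) + 2 - 1) * t = (2 * (i : ℝ) + 1) * t := by push_cast; ring
    have hpos : 0 ≤ (2 * (i : ℝ) + 1) * t := by positivity
    push_cast
    rw [show (2 * ((i:ℝ) + 1) - 1) * t = (2 * (i:ℝ) + 1) * t by ring, abs_of_nonneg hpos]
  set G : ℕ → ℝ := fun i => max 0 (1 - 2 * (i : ℝ) * t) ^ 3 with hGdef
  have hstep : ∀ i ∈ Finset.range N, 6 * t * F i ≤ G i - G (i + 1) := by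
    intro i _
    have := key_ineq t (2 * (i : ℝ) + 1) ht (by linarith [Nat.cast_nonneg (α := ℝ) i])
    simp only [hFdef, hGdef]
    push_cast
    convert this using 4 <;> ring
  have hstrict : 6 * t * F 0 < G 0 - G 1 := by
    have := key_strict t ht
    simp only [hFdef, hGdef]
    norm_num
    convert this using 3 <;> norm_num
  have hlt : ∑ i ∈ Finset.range N, 6 * t * F i < ∑ i ∈ Finset.range N, (G i - G (i + 1)) := by
    apply Finset.sum_lt_sum hstep
    exact ⟨0, Finset.mem_range.mpr hN0, by
      have h0 := hstep 0 (Finset.mem_range.mpr hN0)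
      exact hstrict⟩
  have htel : ∑ i ∈ Finset.range N, (G i - G (i + 1)) = G 0 - G N :=
    Finset.sum_range_sub' G N
  have hG0 : G 0 = 1 := by simp [hGdef]
  have hGN : 0 ≤ G N := pow_nonneg (le_max_left 0 _) 3
  have hkey : 6 * t * ∑ i ∈ Finset.range N, F i < 1 := by
    rw [Finset.mul_sum]
    calc ∑ i ∈ Finset.range N, 6 * t * F i < ∑ i ∈ Finset.range N, (G i - G (i + 1)) := hlt
    _ = G 0 - G N := htel
    _ ≤ 1 := by rw [hG0]; linarith
  have hSx : ∑ i ∈ Finset.range N, F i < x / 3 := by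
    have h6t : 6 * t = 3 / x := by rw [htdef]; field_simp; ring
    rw [h6t] at hkey
    have h := mul_lt_mul_of_pos_left hkey hx
    rw [mul_one] at h
    have heq : x * (3 / x * ∑ i ∈ Finset.range N, F i) = 3 * ∑ i ∈ Finset.range N, F i := by
      field_simp
    linarith
  rw [hOmega, hsum, hsplit, Finset.sum_congr rfl (fun i _ => hFf i)]
  linarith


end Paper
end
end

section
/- The function x ↦ −2x/3 + Ω(1/x, 0), defined for real x > 0, tends to 0 as x → +∞. -/
open scoped BigOperators Classical ComplexOrder

noncomputable section

namespace Paper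

lemma omega_eq (x : ℝ) (hx : 1 ≤ x) :
    Omega (1/x) 0 = ∑ n ∈ Finset.Icc (-(⌊x⌋)) ⌊x⌋, (1 - |(n:ℝ)|/x)^2 := by
  have hx0 : (0:ℝ) < x := by linarith
  unfold Omega
  rw [tsum_eq_sum (s := Finset.Icc (-(⌊x⌋)) ⌊x⌋)]
  · apply Finset.sum_congr rfl
    intro n hn
    simp only [Finset.mem_Icc] at hn
    have habs : |(n:ℝ)| ≤ x := by
      have : |n| ≤ ⌊x⌋ := abs_le.mpr hn
      calc |(n:ℝ)| = ((|n| : ℤ) : ℝ) := by push_cast; rfl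
        _ ≤ (⌊x⌋ : ℝ) := by exact_mod_cast this
        _ ≤ x := Int.floor_le x
    have h1 : |(n:ℝ) * (1/x) - 0| = |(n:ℝ)|/x := by
      rw [sub_zero, abs_mul, abs_of_pos (by positivity : (0:ℝ) < 1/x), mul_one_div]
    rw [h1, max_eq_right (by rw [sub_nonneg]; exact div_le_one_of_le₀ habs hx0.le)]
  · intro n hn
    simp only [Finset.mem_Icc, not_and_or, not_le] at hn
    have habs : x < |(n:ℝ)| := by
      have hfl : 1 ≤ ⌊x⌋ := Int.le_floor.mpr (by exact_mod_cast hx)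
      have : ⌊x⌋ < |n| := by
        rcases hn with h | h <;> rcases abs_cases n with ⟨he, _⟩ | ⟨he, _⟩ <;> omega
      calc x < (⌊x⌋ : ℝ) + 1 := Int.lt_floor_add_one x
        _ ≤ ((|n| : ℤ) : ℝ) := by exact_mod_cast this
        _ = |(n:ℝ)| := by push_cast; rfl
    have h1 : |(n:ℝ) * (1/x) - 0| = |(n:ℝ)|/x := by
      rw [sub_zero, abs_mul, abs_of_pos (by positivity : (0:ℝ) < 1/x), mul_one_div]
    rw [h1, max_eq_left (by rw [sub_nonpos]; exact (le_div_iff₀ hx0).mpr (by linarith)), zero_pow two_ne_zero]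

lemma sum_sq_closed (x : ℝ) (hx : 0 < x) (N : ℕ) :
    ∑ n ∈ Finset.Icc (-(N:ℤ)) (N:ℤ), (1 - |(n:ℝ)|/x)^2
      = (2*(N:ℝ)+1) - 2*N*(N+1)/x + N*(N+1)*(2*N+1)/(3*x^2) := by
  induction N with
  | zero => simp
  | succ N ih =>
    have h1 : Finset.Icc (-((N:ℤ)+1)) ((N:ℤ)+1)
        = insert (-((N:ℤ)+1)) (insert ((N:ℤ)+1) (Finset.Icc (-(N:ℤ)) (N:ℤ))) := by
      ext n; simp [Finset.mem_Icc]; omega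
    push_cast [h1]
    rw [Finset.sum_insert (by simp only [Finset.mem_insert, Finset.mem_Icc]; omega),
        Finset.sum_insert (by simp only [Finset.mem_insert, Finset.mem_Icc]; omega), ih]
    have hN : |(-((N:ℝ)+1))| = (N:ℝ)+1 := by
      rw [abs_neg, abs_of_nonneg]; positivity
    have hN2 : |((N:ℝ)+1)| = (N:ℝ)+1 := by
      rw [abs_of_nonneg]; positivity
    push_cast [hN, hN2]
    field_simp
    ring
/-- The function `x ↦ −2x/3 + Ω(1/x, 0)` tends to `0` as `x → +∞`. -/
theorem tendsto_neg_two_thirds_add_omega :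
    Filter.Tendsto (fun x : ℝ => -(2 * x) / 3 + Omega (1 / x) 0) Filter.atTop (nhds 0) := by
  have hg : Filter.Tendsto (fun x : ℝ => 1/x) Filter.atTop (nhds 0) := by
    simpa only [one_div] using tendsto_inv_atTop_zero
  apply squeeze_zero_norm' ?_ hg
  filter_upwards [Filter.eventually_ge_atTop 1] with x hx
  have hx0 : (0:ℝ) < x := by linarith
  have hfl : 1 ≤ ⌊x⌋ := Int.le_floor.mpr (by exact_mod_cast hx)
  obtain ⟨M, hM⟩ : ∃ M : ℕ, ⌊x⌋ = (M : ℤ) := ⟨⌊x⌋.toNat, (Int.toNat_of_nonneg (by linarith)).symm⟩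
  have hle : (M:ℝ) ≤ x := by
    have := Int.floor_le x; rw [hM] at this; exact_mod_cast this
  have hlt : x < (M:ℝ) + 1 := by
    have := Int.lt_floor_add_one x; rw [hM] at this; exact_mod_cast this
  set d : ℝ := x - M with hd
  have hd0 : 0 ≤ d := by simp [hd]; linarith
  have hd1 : d ≤ 1 := by simp [hd]; linarith
  have key : -(2*x)/3 + Omega (1/x) 0 = 1/(3*x) + d*(1-d)*(2*d-1)/(3*x^2) := by
    rw [omega_eq x hx, hM, sum_sq_closed x hx0 M, hd]
    field_simp
    ring
  rw [key, Real.norm_eq_abs]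
  have hq : |d*(1-d)*(2*d-1)| ≤ 1 := by
    rw [abs_mul, abs_mul]
    have h1 : |d| ≤ 1 := abs_le.mpr ⟨by linarith, hd1⟩
    have h2 : |1-d| ≤ 1 := abs_le.mpr ⟨by linarith, by linarith⟩
    have h3 : |2*d-1| ≤ 1 := abs_le.mpr ⟨by linarith, by linarith⟩
    calc |d| * |1-d| * |2*d-1| ≤ 1 * 1 * 1 := by
          gcongr <;> positivity
      _ = 1 := by norm_num
  calc |1/(3*x) + d*(1-d)*(2*d-1)/(3*x^2)|
      ≤ |1/(3*x)| + |d*(1-d)*(2*d-1)/(3*x^2)| := abs_add_le _ _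
    _ = 1/(3*x) + |d*(1-d)*(2*d-1)|/(3*x^2) := by
        rw [abs_div, abs_div, abs_one, abs_of_pos (show (0:ℝ) < 3*x by positivity),
          abs_of_pos (show (0:ℝ) < 3*x^2 by positivity)]
    _ ≤ 1/(3*x) + 1/(3*x^2) := by gcongr
    _ ≤ 1/(3*x) + 1/(3*x) := by gcongr; nlinarith
    _ ≤ 1/x := by
        rw [← add_div, div_le_div_iff₀ (by positivity) hx0]
        nlinarith


end Paper
end
end

section
/- Let m be a positive integer, p a prime with p ≡ 1 (mod 2m), and 𝒜, ℬ subsets of F_p^*/F_p^{*2m} with |𝒜| = |ℬ| = m. Let f and g be 2m-th residue class sequences with prime p and classes 𝒜 and ℬ respectively. Then: (i) U_{f,g} = ((2/m)·|𝒜∩ℬ| − 1)²; (ii) V_{f,g} = ((2/m)·|𝒜∩ℬ| − 1)² if p ≡ 1 (mod 4m), and V_{f,g} = ((2/m)·|𝒜∩(−ℬ)| − 1)² if p ≢ 1 (mod 4m), where −ℬ = {(−1)·B : B ∈ ℬ}; (iii) 1 ≤ W_f ≤ √(2m−1) and 1 ≤ W_g ≤ √(2m−1); (iv) if p ≢ 1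 (mod 4m) and α is a primitive element of F_p, then (−1)·B = α^m·B for every coset B ∈ F_p^*/F_p^{*2m}. In particular, U_{f,f} = 1, and V_{f,f} = 1 when p ≡ 1 (mod 4m). -/
open scoped BigOperators Classical ComplexOrder

noncomputable section

namespace Paper

section ResidueHelpers

set_option linter.unusedSectionVars false

variable {p m : ℕ} [Fact p.Prime]

lemma p_sub_one_eq (hm : 0 < m) (hp1 : p % (2 * m) = 1) :
    p - 1 = 2 * m * (p / (2 * m)) := by
  have h := Nat.div_add_mod p (2 * m)
  omega

lemma p_ge_three (hm : 0 < m) (hp1 : p % (2 * m) = 1) : 3 ≤ p := by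
  have hp2 : 2 ≤ p := (Fact.out : p.Prime).two_le
  rcases Nat.lt_or_ge p 3 with h | h
  · interval_cases p
    · -- p = 2
      rcases Nat.lt_or_ge m 2 with hm2 | hm2
      · interval_cases m <;> omega
      · have : 2 % (2 * m) = 2 := Nat.mod_eq_of_lt (by omega)
        omega
  · exact h

lemma abs_char (χ : MChar p) (u : (ZMod p)ˣ) : ‖χ (u : ZMod p)‖ = 1 := by
  have hcard : u ^ (p - 1) = 1 := by
    rw [← ZMod.card_units p]; exact pow_card_eq_one
  have h1 : (χ (u : ZMod p)) ^ (p - 1) = 1 := by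
    rw [← map_pow, ← Units.val_pow_eq_pow_val, hcard, Units.val_one, map_one]
  have h2 : ‖χ (u : ZMod p)‖ ^ (p - 1) = 1 := by
    rw [← norm_pow, h1, norm_one]
  have hp : p - 1 ≠ 0 := by have := (Fact.out : p.Prime).two_le; omega
  have hx0 : 0 ≤ ‖χ (u : ZMod p)‖ := norm_nonneg _
  rcases lt_trichotomy (‖χ (u : ZMod p)‖) 1 with h | h | h
  · have := pow_lt_one₀ hx0 h hp
    rw [h2] at this; exact absurd this (lt_irrefl 1)
  · exact h
  · have := one_lt_pow₀ h hp
    rw [h2] at this; exact absurd this (lt_irrefl 1)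

lemma inv_char_apply (χ : MChar p) (u : (ZMod p)ˣ) :
    χ⁻¹ (u : ZMod p) = χ ((u⁻¹ : (ZMod p)ˣ) : ZMod p) := by
  rw [MulChar.inv_apply', Units.val_inv_eq_inv_val]

lemma conj_char (χ : MChar p) (u : (ZMod p)ˣ) :
    (starRingEnd ℂ) (χ (u : ZMod p)) = χ⁻¹ (u : ZMod p) := by
  have h1 : χ⁻¹ (u : ZMod p) * χ (u : ZMod p) = 1 := by
    rw [← MulChar.mul_apply, inv_mul_cancel, MulChar.one_apply_coe]
  have h2 : (χ (u : ZMod p))⁻¹ = (starRingEnd ℂ) (χ (u : ZMod p)) :=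
    RCLike.inv_eq_conj (abs_char χ u)
  rw [← h2]
  exact (eq_inv_of_mul_eq_one_left h1).symm


lemma exists_pow_eq {α : (ZMod p)ˣ} (hα : IsPrimitive p α) (u : (ZMod p)ˣ) :
    ∃ k : ℕ, α ^ k = u := by
  have := mem_powers_iff_mem_zpowers.mpr (hα u)
  exact (Submonoid.mem_powers_iff u α).mp this

lemma orderOf_primitive {α : (ZMod p)ˣ} (hα : IsPrimitive p α) : orderOf α = p - 1 := by
  rw [orderOf_eq_card_of_forall_mem_zpowers hα, Nat.card_eq_fintype_card, ZMod.card_units]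

lemma char_pow_eq_one_iff {α : (ZMod p)ˣ} (hα : IsPrimitive p α) (χ : MChar p) (n : ℕ) :
    χ ^ n = 1 ↔ (χ (α : ZMod p)) ^ n = 1 := by
  constructor
  · intro h
    have := congrArg (fun ψ : MChar p => ψ (α : ZMod p)) h
    simpa only [MulChar.pow_apply_coe, MulChar.one_apply_coe] using this
  · intro h
    apply MulChar.ext
    intro u
    obtain ⟨k, hk⟩ := exists_pow_eq hα u
    rw [← hk]
    have h1 : (χ ^ n) ((α ^ k : (ZMod p)ˣ) : ZMod p) = ((χ (α : ZMod p)) ^ n) ^ k := by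
      rw [MulChar.pow_apply_coe, Units.val_pow_eq_pow_val, map_pow, ← pow_mul, ← pow_mul,
        Nat.mul_comm]
    rw [h1, h, one_pow, MulChar.one_apply_coe]

lemma mem_powSubgroup_iff (hm : 0 < m) (hp1 : p % (2 * m) = 1)
    {α : (ZMod p)ˣ} (hα : IsPrimitive p α) (k : ℕ) :
    α ^ k ∈ powSubgroup p m ↔ 2 * m ∣ k := by
  have hdvd : 2 * m ∣ p - 1 := ⟨p / (2 * m), by have := Nat.div_add_mod p (2 * m); omega⟩
  constructor
  · rintro ⟨v, hv⟩
    obtain ⟨t, ht⟩ := exists_pow_eq hα v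
    have hv' : α ^ (2 * m * t) = α ^ k := by
      rw [mul_comm (2 * m) t, pow_mul, ht]; exact hv
    have hmod : 2 * m * t ≡ k [MOD orderOf α] := pow_eq_pow_iff_modEq.mp hv'
    rw [orderOf_primitive hα] at hmod
    have h2 : 2 * m * t ≡ k [MOD 2 * m] := hmod.of_dvd hdvd
    have h3 : 2 * m * t ≡ 0 [MOD 2 * m] := (Nat.modEq_zero_iff_dvd).mpr ⟨t, rfl⟩
    exact (Nat.modEq_zero_iff_dvd).mp ((h3.symm.trans h2).symm)
  · rintro ⟨t, rfl⟩
    exact ⟨α ^ t, by rw [powMonoidHom_apply, ← pow_mul, mul_comm t (2*m)]⟩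

lemma exists_prim_char (hm : 0 < m) (hp1 : p % (2 * m) = 1) {α : (ZMod p)ˣ}
    (hα : IsPrimitive p α) :
    ∃ χ₁ : MChar p, orderOf χ₁ = 2 * m ∧ IsPrimitiveRoot (χ₁ (α : ZMod p)) (2 * m) := by
  have hdvd : 2 * m ∣ Fintype.card (ZMod p) - 1 := by
    rw [ZMod.card]
    exact ⟨p / (2 * m), by have := Nat.div_add_mod p (2 * m); omega⟩
  have hζ : IsPrimitiveRoot (Complex.exp (2 * Real.pi * Complex.I / (2 * m : ℕ))) (2 * m) :=
    Complex.isPrimitiveRoot_exp (2 * m) (by positivity)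
  obtain ⟨χ₁, hχ₁⟩ := MulChar.exists_mulChar_orderOf (ZMod p) hdvd hζ
  refine ⟨χ₁, hχ₁, ?_⟩
  have horder : orderOf (χ₁ (α : ZMod p)) = 2 * m := by
    rw [← hχ₁]
    exact orderOf_eq_orderOf_iff.mpr fun n => (char_pow_eq_one_iff hα χ₁ n).symm
  exact horder ▸ IsPrimitiveRoot.orderOf _


def thetaSet (p m : ℕ) [Fact p.Prime] : Finset (MChar p) :=
  Finset.univ.filter (fun χ : MChar p => χ ^ (2 * m) = 1)

lemma theta_eq (hm : 0 < m) {α : (ZMod p)ˣ} (hα : IsPrimitive p α)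
    {χ₁ : MChar p} (hord : orderOf χ₁ = 2 * m)
    (hprim : IsPrimitiveRoot (χ₁ (α : ZMod p)) (2 * m)) :
    thetaSet p m = (Finset.range (2 * m)).image (fun j => χ₁ ^ j) := by
  haveI : NeZero (2 * m) := ⟨by omega⟩
  ext χ
  simp only [thetaSet, Finset.mem_filter, Finset.mem_univ, true_and, Finset.mem_image,
    Finset.mem_range]
  constructor
  · intro h
    have hχα : (χ (α : ZMod p)) ^ (2 * m) = 1 := (char_pow_eq_one_iff hα χ (2 * m)).mp h
    obtain ⟨i, hi, hiz⟩ := hprim.eq_pow_of_pow_eq_one hχα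
    refine ⟨i, hi, ?_⟩
    apply MulChar.ext
    intro u
    obtain ⟨k, hk⟩ := exists_pow_eq hα u
    have h1 : (χ₁ ^ i) ((u : (ZMod p)ˣ) : ZMod p) = ((χ₁ (α : ZMod p)) ^ i) ^ k := by
      rw [MulChar.pow_apply_coe, ← hk, Units.val_pow_eq_pow_val, map_pow, ← pow_mul, ← pow_mul,
        Nat.mul_comm]
    rw [h1, hiz, ← hk, Units.val_pow_eq_pow_val, map_pow]
  · rintro ⟨j, hj, rfl⟩
    rw [← pow_mul, mul_comm j (2 * m), pow_mul, ← hord, pow_orderOf_eq_one, one_pow]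

lemma theta_card (hm : 0 < m) (hp1 : p % (2 * m) = 1) {α : (ZMod p)ˣ}
    (hα : IsPrimitive p α) : (thetaSet p m).card = 2 * m := by
  obtain ⟨χ₁, hord, hprim⟩ := exists_prim_char hm hp1 hα
  rw [theta_eq hm hα hord hprim, Finset.card_image_of_injOn, Finset.card_range]
  intro i hi j hj hij
  have := pow_injOn_Iio_orderOf (x := χ₁)
  rw [hord] at this
  exact this (by simpa using hi) (by simpa using hj) hij

lemma one_mem_theta : (1 : MChar p) ∈ thetaSet p m := by
  simp [thetaSet, one_pow]

lemma sum_theta (hm : 0 < m) (hp1 : p % (2 * m) = 1) {α : (ZMod p)ˣ}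
    (hα : IsPrimitive p α) (u : (ZMod p)ˣ) :
    ∑ χ ∈ thetaSet p m, χ (u : ZMod p)
      = if u ∈ powSubgroup p m then ((2 * m : ℕ) : ℂ) else 0 := by
  obtain ⟨χ₁, hord, hprim⟩ := exists_prim_char hm hp1 hα
  have hinj : Set.InjOn (fun j => χ₁ ^ j) ↑(Finset.range (2 * m)) := by
    intro i hi j hj hij
    have := pow_injOn_Iio_orderOf (x := χ₁)
    rw [hord] at this
    exact this (by simpa using hi) (by simpa using hj) hij
  obtain ⟨k, hk⟩ := exists_pow_eq hα u
  have hval : ∀ j : ℕ, (χ₁ ^ j) (u : ZMod p) = ((χ₁ (α : ZMod p)) ^ k) ^ j := by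
    intro j
    rw [MulChar.pow_apply_coe, ← hk, Units.val_pow_eq_pow_val, map_pow]
  rw [theta_eq hm hα hord hprim, Finset.sum_image hinj]
  simp only [hval]
  rw [← hk, mem_powSubgroup_iff hm hp1 hα k]
  by_cases hdvd : 2 * m ∣ k
  · have hz : (χ₁ (α : ZMod p)) ^ k = 1 := (hprim.pow_eq_one_iff_dvd k).mpr hdvd
    simp [hz, hdvd]
  · have hz : (χ₁ (α : ZMod p)) ^ k ≠ 1 := fun h => hdvd ((hprim.pow_eq_one_iff_dvd k).mp h)
    rw [if_neg hdvd, geom_sum_eq hz]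
    have : ((χ₁ (α : ZMod p)) ^ k) ^ (2 * m) = 1 := by
      rw [← pow_mul, mul_comm k (2 * m), pow_mul, hprim.pow_eq_one, one_pow]
    rw [this, sub_self, zero_div]


lemma count_eq (μ : ResCosets p m) (A B : Finset (ResCosets p m)) :
    (B.filter (fun b => μ * b ∈ A)).card = (A ∩ B.image (fun b => μ * b)).card := by
  have h1 : (B.filter (fun b => μ * b ∈ A)).image (fun b => μ * b)
      = (B.image (fun b => μ * b)).filter (fun x => x ∈ A) := by
    ext x
    simp only [Finset.mem_image, Finset.mem_filter]
    aesop
  calc (B.filter (fun b => μ * b ∈ A)).card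
      = ((B.filter (fun b => μ * b ∈ A)).image (fun b => μ * b)).card :=
        (Finset.card_image_of_injective _ (fun x y hxy => by
          simpa using congrArg (fun z => μ⁻¹ * z) hxy)).symm
    _ = ((B.image (fun b => μ * b)).filter (fun x => x ∈ A)).card := by rw [h1]
    _ = (A ∩ B.image (fun b => μ * b)).card := by
        rw [Finset.filter_mem_eq_inter, Finset.inter_comm]

lemma out_mk (a : ResCosets p m) : (QuotientGroup.mk a.out : ResCosets p m) = a :=
  Quotient.out_eq a

lemma cond_iff (ε : (ZMod p)ˣ) (a b : ResCosets p m) :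
    ((ε * b.out) * a.out⁻¹ ∈ powSubgroup p m) ↔ (a = (QuotientGroup.mk ε : ResCosets p m) * b) := by
  have h1 : ((ε * b.out) * a.out⁻¹ : (ZMod p)ˣ) = (a.out)⁻¹ * (ε * b.out) := by
    rw [mul_comm]
  rw [h1, ← QuotientGroup.eq, QuotientGroup.mk_mul, out_mk, out_mk]

lemma key_sum (hm : 0 < m) (hp1 : p % (2 * m) = 1) {α : (ZMod p)ˣ} (hα : IsPrimitive p α)
    (A B : Finset (ResCosets p m)) (hA : A.card = m) (hB : B.card = m) (ε : (ZMod p)ˣ) :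
    ∑ φ ∈ (thetaSet p m).erase 1,
        ((1 / (m : ℂ)) * ∑ a ∈ A, φ⁻¹ ((a.out : (ZMod p)ˣ) : ZMod p)) *
        ((1 / (m : ℂ)) * ∑ b ∈ B, φ (((ε * b.out : (ZMod p)ˣ)) : ZMod p))
      = (((2 / (m : ℝ)) * ((A ∩ B.image
            (fun b => (QuotientGroup.mk ε : ResCosets p m) * b)).card : ℝ) - 1 : ℝ) : ℂ) := by
  set μ : ResCosets p m := QuotientGroup.mk ε with hμ
  set N : ℕ := (A ∩ B.image (fun b => μ * b)).card with hN
  have step1 : ∀ φ ∈ (thetaSet p m).erase 1,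
      ((1 / (m : ℂ)) * ∑ a ∈ A, φ⁻¹ ((a.out : (ZMod p)ˣ) : ZMod p)) *
      ((1 / (m : ℂ)) * ∑ b ∈ B, φ (((ε * b.out : (ZMod p)ˣ)) : ZMod p))
      = (1 / (m : ℂ)) * (1 / (m : ℂ)) *
          ∑ a ∈ A, ∑ b ∈ B, φ ((((ε * b.out) * a.out⁻¹ : (ZMod p)ˣ)) : ZMod p) := by
    intro φ _
    rw [mul_mul_mul_comm, Finset.sum_mul_sum]
    congr 1
    refine Finset.sum_congr rfl fun a _ => Finset.sum_congr rfl fun b _ => ?_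
    rw [inv_char_apply, ← map_mul, ← Units.val_mul, mul_comm]
  have hSsum : ∀ w : (ZMod p)ˣ, ∑ φ ∈ (thetaSet p m).erase 1, φ (w : ZMod p)
      = (if w ∈ powSubgroup p m then ((2 * m : ℕ) : ℂ) else 0) - 1 := by
    intro w
    rw [Finset.sum_erase_eq_sub one_mem_theta, sum_theta hm hp1 hα, MulChar.one_apply_coe]
  have step2 : ∑ φ ∈ (thetaSet p m).erase 1, ∑ a ∈ A, ∑ b ∈ B,
        φ ((((ε * b.out) * a.out⁻¹ : (ZMod p)ˣ)) : ZMod p)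
      = 2 * (m : ℂ) * (N : ℂ) - (m : ℂ) * (m : ℂ) := by
    rw [Finset.sum_comm]
    have h2 : ∀ a ∈ A, (∑ φ ∈ (thetaSet p m).erase 1, ∑ b ∈ B,
          φ ((((ε * b.out) * a.out⁻¹ : (ZMod p)ˣ)) : ZMod p))
        = ∑ b ∈ B, ((if a = μ * b then ((2 * m : ℕ) : ℂ) else 0) - 1) := by
      intro a _
      rw [Finset.sum_comm]
      refine Finset.sum_congr rfl fun b _ => ?_
      rw [hSsum]
      congr 1
      simp only [cond_iff ε a b, hμ]
    rw [Finset.sum_congr rfl h2]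
    have h3 : ∀ a ∈ A, ∑ b ∈ B, ((if a = μ * b then ((2 * m : ℕ) : ℂ) else 0) - 1)
        = (∑ b ∈ B, if a = μ * b then ((2 * m : ℕ) : ℂ) else 0) - (m : ℂ) := by
      intro a _
      rw [Finset.sum_sub_distrib, Finset.sum_const, hB]
      simp
    rw [Finset.sum_congr rfl h3, Finset.sum_sub_distrib, Finset.sum_const, hA, Finset.sum_comm]
    have h4 : ∀ b ∈ B, (∑ a ∈ A, if a = μ * b then ((2 * m : ℕ) : ℂ) else 0)
        = if μ * b ∈ A then ((2 * m : ℕ) : ℂ) else 0 := by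
      intro b _
      exact Finset.sum_ite_eq' A (μ * b) (fun _ => ((2 * m : ℕ) : ℂ))
    rw [Finset.sum_congr rfl h4, ← Finset.sum_filter, Finset.sum_const, count_eq, ← hN]
    push_cast
    ring
  rw [Finset.sum_congr rfl step1, ← Finset.mul_sum, step2]
  have hm0 : (m : ℂ) ≠ 0 := Nat.cast_ne_zero.mpr (by omega)
  push_cast
  field_simp


lemma mem_erase_theta (φ : MChar p) :
    φ ∈ (thetaSet p m).erase 1 ↔ φ ≠ 1 ∧ φ ^ (2 * m) = 1 := by
  simp [thetaSet, Finset.mem_erase]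

lemma resCoef_apply_mem {A : Finset (ResCosets p m)} {φ : MChar p}
    (h : φ ∈ (thetaSet p m).erase 1) :
    resCoef p m A φ = (1 / (m : ℂ)) * ∑ a ∈ A, φ⁻¹ ((a.out : (ZMod p)ˣ) : ZMod p) :=
  if_pos ((mem_erase_theta φ).mp h)

lemma resCoef_apply_not_mem {A : Finset (ResCosets p m)} {φ : MChar p}
    (h : φ ∉ (thetaSet p m).erase 1) : resCoef p m A φ = 0 :=
  if_neg (fun hc => h ((mem_erase_theta φ).mpr hc))

lemma U_eq (hm : 0 < m) (hp1 : p % (2 * m) = 1) {α : (ZMod p)ˣ} (hα : IsPrimitive p α)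
    (A B : Finset (ResCosets p m)) (hA : A.card = m) (hB : B.card = m) :
    ∑ φ : MChar p, resCoef p m A φ * (starRingEnd ℂ) (resCoef p m B φ)
      = (((2 / (m : ℝ)) * ((A ∩ B).card : ℝ) - 1 : ℝ) : ℂ) := by
  rw [← Finset.sum_subset (Finset.subset_univ ((thetaSet p m).erase 1))
    (fun φ _ hφ => by rw [resCoef_apply_not_mem hφ, zero_mul])]
  have step : ∀ φ ∈ (thetaSet p m).erase 1,
      resCoef p m A φ * (starRingEnd ℂ) (resCoef p m B φ)
      = ((1 / (m : ℂ)) * ∑ a ∈ A, φ⁻¹ ((a.out : (ZMod p)ˣ) : ZMod p)) *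
        ((1 / (m : ℂ)) * ∑ b ∈ B, φ ((((1 : (ZMod p)ˣ) * b.out : (ZMod p)ˣ)) : ZMod p)) := by
    intro φ hφ
    rw [resCoef_apply_mem hφ, resCoef_apply_mem hφ]
    congr 1
    rw [map_mul, map_sum]
    congr 1
    · rw [map_div₀, map_one, Complex.conj_natCast]
    · refine Finset.sum_congr rfl fun b _ => ?_
      rw [conj_char, inv_inv, one_mul]
  have himg : A ∩ B.image (fun b => (QuotientGroup.mk (1 : (ZMod p)ˣ) : ResCosets p m) * b)
      = A ∩ B := by
    have h1 : ∀ y : ResCosets p m, (QuotientGroup.mk (1 : (ZMod p)ˣ) : ResCosets p m) * y = y :=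
      fun y => by rw [QuotientGroup.mk_one]; exact one_mul y
    ext x
    simp only [h1, Finset.mem_inter, Finset.mem_image]
    constructor
    · rintro ⟨hx, b, hb, rfl⟩
      exact ⟨hx, hb⟩
    · rintro ⟨hx, hb⟩
      exact ⟨hx, x, hb, rfl⟩
  rw [Finset.sum_congr rfl step, key_sum hm hp1 hα A B hA hB 1, himg]

lemma V_eq (hm : 0 < m) (hp1 : p % (2 * m) = 1) {α : (ZMod p)ˣ} (hα : IsPrimitive p α)
    (A B : Finset (ResCosets p m)) (hA : A.card = m) (hB : B.card = m) :
    ∑ φ : MChar p, resCoef p m A φ * resCoef p m B φ⁻¹ * φ (-1 : ZMod p)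
      = (((2 / (m : ℝ)) * ((A ∩ B.image
            (fun b => (QuotientGroup.mk (-1 : (ZMod p)ˣ) : ResCosets p m) * b)).card : ℝ)
          - 1 : ℝ) : ℂ) := by
  rw [← Finset.sum_subset (Finset.subset_univ ((thetaSet p m).erase 1))
    (fun φ _ hφ => by rw [resCoef_apply_not_mem hφ, zero_mul, zero_mul])]
  have step : ∀ φ ∈ (thetaSet p m).erase 1,
      resCoef p m A φ * resCoef p m B φ⁻¹ * φ (-1 : ZMod p)
      = ((1 / (m : ℂ)) * ∑ a ∈ A, φ⁻¹ ((a.out : (ZMod p)ˣ) : ZMod p)) *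
        ((1 / (m : ℂ)) * ∑ b ∈ B, φ ((((-1 : (ZMod p)ˣ) * b.out : (ZMod p)ˣ)) : ZMod p)) := by
    intro φ hφ
    obtain ⟨hφ1, hφ2m⟩ := (mem_erase_theta φ).mp hφ
    have hinv : φ⁻¹ ∈ (thetaSet p m).erase 1 := by
      rw [mem_erase_theta]
      exact ⟨fun h => hφ1 (inv_eq_one.mp h), by rw [inv_pow, hφ2m, inv_one]⟩
    rw [resCoef_apply_mem hφ, resCoef_apply_mem hinv]
    have hneg : (-1 : ZMod p) = (((-1 : (ZMod p)ˣ)) : ZMod p) := by simp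
    rw [hneg, mul_assoc, mul_comm ((1 / (m : ℂ)) * ∑ b ∈ B, φ⁻¹⁻¹ _) _, ← mul_assoc,
      mul_assoc (1 / (m : ℂ) * _)]
    congr 1
    rw [mul_comm _ (1 / (m : ℂ) * _), mul_assoc, Finset.sum_mul]
    congr 1
    refine Finset.sum_congr rfl fun b _ => ?_
    rw [inv_inv, ← map_mul, ← Units.val_mul, mul_comm b.out]
  rw [Finset.sum_congr rfl step, key_sum hm hp1 hα A B hA hB (-1 : (ZMod p)ˣ)]


lemma sum_sq (hm : 0 < m) (hp1 : p % (2 * m) = 1) {α : (ZMod p)ˣ} (hα : IsPrimitive p α)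
    (A : Finset (ResCosets p m)) (hA : A.card = m) :
    ∑ φ : MChar p, (‖resCoef p m A φ‖) ^ 2 = 1 := by
  have h := U_eq hm hp1 hα A A hA hA
  have h2 : ∀ φ : MChar p, resCoef p m A φ * (starRingEnd ℂ) (resCoef p m A φ)
      = (((‖resCoef p m A φ‖) ^ 2 : ℝ) : ℂ) := fun φ => by
    rw [Complex.mul_conj, Complex.normSq_eq_norm_sq]
  rw [Finset.sum_congr rfl (fun φ _ => h2 φ), ← Complex.ofReal_sum] at h
  have h3 := Complex.ofReal_inj.mp h
  rw [Finset.inter_self, hA] at h3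
  rw [h3]
  have hm0 : (m : ℝ) ≠ 0 := Nat.cast_ne_zero.mpr (by omega)
  field_simp
  norm_num

lemma abs_resCoef_le_one (hm : 0 < m) (A : Finset (ResCosets p m)) (hA : A.card = m)
    (φ : MChar p) : ‖resCoef p m A φ‖ ≤ 1 := by
  by_cases hφ : φ ∈ (thetaSet p m).erase 1
  · rw [resCoef_apply_mem hφ, norm_mul]
    have h1 : ‖1 / (m : ℂ)‖ = 1 / (m : ℝ) := by
      rw [norm_div, norm_one, Complex.norm_natCast]
    have h2 : ‖∑ a ∈ A, φ⁻¹ ((a.out : (ZMod p)ˣ) : ZMod p)‖ ≤ (m : ℝ) := by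
      calc ‖∑ a ∈ A, φ⁻¹ ((a.out : (ZMod p)ˣ) : ZMod p)‖
          ≤ ∑ a ∈ A, ‖φ⁻¹ ((a.out : (ZMod p)ˣ) : ZMod p)‖ :=
            norm_sum_le _ _
        _ = ∑ a ∈ A, 1 := Finset.sum_congr rfl fun a _ => abs_char φ⁻¹ a.out
        _ = (m : ℝ) := by rw [Finset.sum_const, hA]; simp
    rw [h1]
    have hm0 : (0 : ℝ) < (m : ℝ) := by exact_mod_cast hm
    calc 1 / (m : ℝ) * ‖∑ a ∈ A, φ⁻¹ ((a.out : (ZMod p)ˣ) : ZMod p)‖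
        ≤ 1 / (m : ℝ) * (m : ℝ) := by
          apply mul_le_mul_of_nonneg_left h2 (by positivity)
      _ = 1 := by field_simp
  · rw [resCoef_apply_not_mem hφ, norm_zero]
    norm_num

lemma W_bounds (hm : 0 < m) (hp1 : p % (2 * m) = 1) {α : (ZMod p)ˣ} (hα : IsPrimitive p α)
    (A : Finset (ResCosets p m)) (hA : A.card = m) :
    1 ≤ Wparam p (resCoef p m A) ∧
      Wparam p (resCoef p m A) ≤ Real.sqrt (2 * (m : ℝ) - 1) := by
  have hub : ∀ φ : MChar p, ‖resCoef p m A φ‖ ≤ 1 := abs_resCoef_le_one hm A hA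
  constructor
  · calc (1 : ℝ) = ∑ φ : MChar p, (‖resCoef p m A φ‖) ^ 2 :=
          (sum_sq hm hp1 hα A hA).symm
      _ ≤ ∑ φ : MChar p, ‖resCoef p m A φ‖ := by
          refine Finset.sum_le_sum fun φ _ => ?_
          have h0 : 0 ≤ ‖resCoef p m A φ‖ := norm_nonneg _
          nlinarith [hub φ]
      _ = Wparam p (resCoef p m A) := rfl
  · have hWnn : 0 ≤ Wparam p (resCoef p m A) :=
      Finset.sum_nonneg fun φ _ => norm_nonneg _
    have hcard : ((thetaSet p m).erase 1).card = 2 * m - 1 := by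
      rw [Finset.card_erase_of_mem one_mem_theta, theta_card hm hp1 hα]
    have hWS : Wparam p (resCoef p m A)
        = ∑ φ ∈ (thetaSet p m).erase 1, ‖resCoef p m A φ‖ := by
      rw [Wparam, ← Finset.sum_subset (Finset.subset_univ ((thetaSet p m).erase 1))
        (fun φ _ hφ => by rw [resCoef_apply_not_mem hφ, norm_zero])]
    have hsq : (Wparam p (resCoef p m A)) ^ 2 ≤ 2 * (m : ℝ) - 1 := by
      have hCS := Finset.sum_mul_sq_le_sq_mul_sq ((thetaSet p m).erase 1)
        (fun φ => ‖resCoef p m A φ‖) (fun _ => (1 : ℝ))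
      simp only [mul_one, one_pow] at hCS
      have hsum2 : ∑ φ ∈ (thetaSet p m).erase 1, (‖resCoef p m A φ‖) ^ 2 = 1 := by
        rw [Finset.sum_subset (Finset.subset_univ ((thetaSet p m).erase 1))
          (fun φ _ hφ => by rw [resCoef_apply_not_mem hφ, norm_zero]; norm_num)]
        exact sum_sq hm hp1 hα A hA
      rw [hWS]
      calc (∑ φ ∈ (thetaSet p m).erase 1, ‖resCoef p m A φ‖) ^ 2
          ≤ (∑ φ ∈ (thetaSet p m).erase 1, (‖resCoef p m A φ‖) ^ 2) *
              (((thetaSet p m).erase 1).card : ℝ) := by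
            simpa [Finset.sum_const] using hCS
        _ = 2 * (m : ℝ) - 1 := by
            rw [hsum2, hcard, one_mul]
            push_cast [Nat.cast_sub (by omega : 1 ≤ 2 * m)]
            ring
    have h2m1 : (0 : ℝ) ≤ 2 * (m : ℝ) - 1 := by
      have : (1 : ℝ) ≤ (m : ℝ) := by exact_mod_cast hm
      linarith
    exact (Real.le_sqrt hWnn h2m1).mpr hsq

lemma alpha_pow_half (hm : 0 < m) (hp1 : p % (2 * m) = 1) {α : (ZMod p)ˣ}
    (hα : IsPrimitive p α) {j : ℕ} (hj : 2 * j = p - 1) : α ^ j = -1 := by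
  have hp3 := p_ge_three hm hp1
  have hord := orderOf_primitive hα
  have hx2 : (α ^ j) * (α ^ j) = 1 := by
    rw [← pow_add]
    have : j + j = p - 1 := by omega
    rw [this, ← hord, pow_orderOf_eq_one]
  have hx1 : α ^ j ≠ 1 := by
    intro h
    have hdvd : orderOf α ∣ j := orderOf_dvd_of_pow_eq_one h
    rw [hord] at hdvd
    have hj0 : j ≠ 0 := by omega
    have := Nat.le_of_dvd (by omega) hdvd
    omega
  have hval : ((α ^ j : (ZMod p)ˣ) : ZMod p) * ((α ^ j : (ZMod p)ˣ) : ZMod p) = 1 := by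
    rw [← Units.val_mul, hx2, Units.val_one]
  rcases mul_self_eq_one_iff.mp hval with h | h
  · exact absurd (Units.ext h) hx1
  · apply Units.ext
    rw [h]
    simp

lemma mod4_iff (hm : 0 < m) (hp1 : p % (2 * m) = 1) :
    p % (4 * m) = 1 ↔ 2 ∣ (p / (2 * m)) := by
  have hk := p_sub_one_eq hm hp1
  have hp3 := p_ge_three hm hp1
  set k := p / (2 * m) with hkdef
  constructor
  · intro h4
    have h1 : p - 1 = 4 * m * (p / (4 * m)) := by
      have := Nat.div_add_mod p (4 * m)
      omega
    set q := p / (4 * m)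
    have h2 : 2 * m * k = 2 * m * (2 * q) := by
      rw [← hk]
      rw [h1]
      ring
    have := Nat.eq_of_mul_eq_mul_left (by omega : 0 < 2 * m) h2
    exact ⟨q, this⟩
  · rintro ⟨t, ht⟩
    have h2 : p - 1 = 4 * m * t := by rw [hk, ht]; ring
    have hp3 := p_ge_three hm hp1
    have h1 : p = 4 * m * t + 1 := by omega
    rw [h1, Nat.mul_add_mod]
    exact Nat.mod_eq_of_lt (by omega)

lemma neg_one_mem (hm : 0 < m) (hp1 : p % (2 * m) = 1) {α : (ZMod p)ˣ}
    (hα : IsPrimitive p α) (h4 : p % (4 * m) = 1) :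
    (-1 : (ZMod p)ˣ) ∈ powSubgroup p m := by
  obtain ⟨t, ht⟩ := (mod4_iff hm hp1).mp h4
  have hk := p_sub_one_eq hm hp1
  have hj : 2 * (m * (p / (2 * m))) = p - 1 := by
    rw [hk]; ring
  rw [← alpha_pow_half hm hp1 hα hj]
  refine (mem_powSubgroup_iff hm hp1 hα _).mpr ⟨t, ?_⟩
  rw [ht]; ring

lemma negCoset_eq_mul (b : ResCosets p m) :
    negCoset p m b = (QuotientGroup.mk (-1 : (ZMod p)ˣ) : ResCosets p m) * b := by
  rw [negCoset, QuotientGroup.mk_mul, out_mk]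

lemma neg_shift (hm : 0 < m) (hp1 : p % (2 * m) = 1) {α : (ZMod p)ˣ}
    (hα : IsPrimitive p α) (h4 : p % (4 * m) ≠ 1) (b : (ZMod p)ˣ) :
    (QuotientGroup.mk ((-1 : (ZMod p)ˣ) * b) : ResCosets p m)
      = QuotientGroup.mk (α ^ m * b) := by
  have hk := p_sub_one_eq hm hp1
  set k := p / (2 * m) with hkdef
  have hkodd : ¬ 2 ∣ k := fun h => h4 ((mod4_iff hm hp1).mpr h)
  obtain ⟨t, ht⟩ : ∃ t, k = 2 * t + 1 := ⟨k / 2, by omega⟩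
  have hj : 2 * (m * k) = p - 1 := by rw [hk]; ring
  have hneg : (-1 : (ZMod p)ˣ) = α ^ (m * k) := (alpha_pow_half hm hp1 hα hj).symm
  have key : ((-1 : (ZMod p)ˣ)) * b = (α ^ (2 * m * t)) * (α ^ m * b) := by
    rw [hneg, ← mul_assoc, ← pow_add]
    congr 2
    rw [ht]; ring
  rw [key, QuotientGroup.mk_mul]
  have h1 : (QuotientGroup.mk (α ^ (2 * m * t)) : ResCosets p m) = 1 :=
    (QuotientGroup.eq_one_iff _).mpr ((mem_powSubgroup_iff hm hp1 hα _).mpr ⟨t, rfl⟩)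
  rw [h1]
  exact one_mul (QuotientGroup.mk (α ^ m * b) : ResCosets p m)


end ResidueHelpers

/-- Combinatorial formulae for the parameters `U_{f,g}`, `V_{f,g}`, `W_f`, `W_g` of a pair
of `2m`-th residue class sequences with classes `𝒜` and `ℬ`. -/
theorem residue_class_parameters
    (m p : ℕ) (hm : 0 < m) [Fact p.Prime] (hp1 : p % (2 * m) = 1)
    (A B : Finset (ResCosets p m)) (hA : A.card = m) (hB : B.card = m)
    (α : (ZMod p)ˣ) (hα : IsPrimitive p α) :
    Uparam p (resCoef p m A) (resCoef p m B)
        = ((2 / (m : ℝ)) * ((A ∩ B).card : ℝ) - 1) ^ 2 ∧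
    (p % (4 * m) = 1 →
      Vparam p (resCoef p m A) (resCoef p m B)
        = ((2 / (m : ℝ)) * ((A ∩ B).card : ℝ) - 1) ^ 2) ∧
    (p % (4 * m) ≠ 1 →
      Vparam p (resCoef p m A) (resCoef p m B)
        = ((2 / (m : ℝ)) * ((A ∩ B.image (negCoset p m)).card : ℝ) - 1) ^ 2) ∧
    (1 ≤ Wparam p (resCoef p m A) ∧ Wparam p (resCoef p m A) ≤ Real.sqrt (2 * (m : ℝ) - 1)) ∧
    (1 ≤ Wparam p (resCoef p m B) ∧ Wparam p (resCoef p m B) ≤ Real.sqrt (2 * (m : ℝ) - 1)) ∧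
    (p % (4 * m) ≠ 1 →
      ∀ b : (ZMod p)ˣ,
        (QuotientGroup.mk ((-1 : (ZMod p)ˣ) * b) : ResCosets p m)
          = QuotientGroup.mk (α ^ m * b)) ∧
    Uparam p (resCoef p m A) (resCoef p m A) = 1 ∧
    (p % (4 * m) = 1 → Vparam p (resCoef p m A) (resCoef p m A) = 1) := by
  have hU := U_eq hm hp1 hα A B hA hB
  have hUA := U_eq hm hp1 hα A A hA hA
  have hV := V_eq hm hp1 hα A B hA hB
  have hVA := V_eq hm hp1 hα A A hA hA
  have hm0 : (m : ℝ) ≠ 0 := Nat.cast_ne_zero.mpr (by omega)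
  have himg_eq : ∀ (C : Finset (ResCosets p m)), p % (4 * m) = 1 →
      C.image (fun b => (QuotientGroup.mk (-1 : (ZMod p)ˣ) : ResCosets p m) * b) = C := by
    intro C h4
    have hone : (QuotientGroup.mk (-1 : (ZMod p)ˣ) : ResCosets p m) = 1 :=
      (QuotientGroup.eq_one_iff _).mpr (neg_one_mem hm hp1 hα h4)
    have hid : ∀ b : ResCosets p m,
        (QuotientGroup.mk (-1 : (ZMod p)ˣ) : ResCosets p m) * b = b := fun b => by
      rw [hone]; exact one_mul b
    rw [Finset.image_congr (fun b _ => hid b), Finset.image_id']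
  refine ⟨?_, ?_, ?_, W_bounds hm hp1 hα A hA, W_bounds hm hp1 hα B hB,
    fun h4 b => neg_shift hm hp1 hα h4 b, ?_, ?_⟩
  · unfold Uparam
    rw [hU, Complex.norm_real, Real.norm_eq_abs, sq_abs]
  · intro h4
    rw [himg_eq B h4] at hV
    unfold Vparam
    rw [hV, Complex.norm_real, Real.norm_eq_abs, sq_abs]
  · intro h4
    have himg : B.image (negCoset p m)
        = B.image (fun b => (QuotientGroup.mk (-1 : (ZMod p)ˣ) : ResCosets p m) * b) :=
      Finset.image_congr (fun b _ => negCoset_eq_mul b)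
    unfold Vparam
    rw [hV, Complex.norm_real, Real.norm_eq_abs, sq_abs, himg]
  · unfold Uparam
    rw [hUA, Complex.norm_real, Real.norm_eq_abs, sq_abs, Finset.inter_self, hA]
    have h1 : (2 / (m : ℝ)) * (m : ℝ) - 1 = 1 := by field_simp; norm_num
    rw [h1, one_pow]
  · intro h4
    rw [himg_eq A h4] at hVA
    unfold Vparam
    rw [hVA, Complex.norm_real, Real.norm_eq_abs, sq_abs, Finset.inter_self, hA]
    have h1 : (2 / (m : ℝ)) * (m : ℝ) - 1 = 1 := by field_simp; norm_num
    rw [h1, one_pow]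


end Paper
end
end
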